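/- arXiv:1104.1697 — 3 statements merged into one kernel-verified Lean document; each statement's English description precedes it below -/
import Mathlib

section
/- Let A be an m×n complex matrix of rank r and m₁ ≥ r an integer. Then A{1,2,3} = { Z(AZ)† : Z ∈ C^{n×m₁}, rank(AZ) = r }. -/
open Matrix

/-- `X` is the Moore-Penrose inverse of `A`: the four Penrose equations hold. -/
def IsMPInv {m n : ℕ} (A : Matrix (Fin m) (Fin n) ℂ) (X : Matrix (Fin n) (Fin m) ℂ) : Prop :=
  A * X * A = A ∧ X * A * X = X ∧ (A * X)ᴴ = A * X ∧ (X * A)ᴴ = X * A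

namespace Stmt5Aux

lemma mulVec_ext {a b : ℕ} {M N : Matrix (Fin a) (Fin b) ℂ}
    (h : ∀ v, M *ᵥ v = N *ᵥ v) : M = N := by
  ext i j
  simpa using congrFun (h (Pi.single j 1)) i

lemma fix_of_idem {a : ℕ} {P : Matrix (Fin a) (Fin a) ℂ} (hP : P * P = P)
    {x : Fin a → ℂ} (hx : x ∈ LinearMap.range P.mulVecLin) : P *ᵥ x = x := by
  obtain ⟨y, rfl⟩ := hx
  show P *ᵥ P *ᵥ y = P *ᵥ y
  rw [Matrix.mulVec_mulVec, hP]

lemma range_mul_le {a b c : ℕ} (M : Matrix (Fin a) (Fin b) ℂ) (N : Matrix (Fin b) (Fin c) ℂ) :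
    LinearMap.range (M * N).mulVecLin ≤ LinearMap.range M.mulVecLin := by
  rw [Matrix.mulVecLin_mul]
  exact LinearMap.range_comp_le_range _ _

lemma absorb {a b : ℕ} {P : Matrix (Fin a) (Fin a) ℂ} {N : Matrix (Fin a) (Fin b) ℂ}
    (hP : P * P = P)
    (h : LinearMap.range N.mulVecLin ≤ LinearMap.range P.mulVecLin) :
    P * N = N := by
  apply mulVec_ext
  intro v
  rw [← Matrix.mulVec_mulVec]
  exact fix_of_idem hP (h ⟨v, rfl⟩)

/-- Key construction: a hermitian idempotent `P` of rank `r ≤ m₁` can be written as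
`C * Cᴴ` with `C : m × m₁`, and moreover `P * C = C`. -/
lemma exists_factor {m r m₁ : ℕ} {P : Matrix (Fin m) (Fin m) ℂ}
    (hP2 : P * P = P) (hPH : P.IsHermitian) (hr : P.rank = r) (hm : r ≤ m₁) :
    ∃ C : Matrix (Fin m) (Fin m₁) ℂ, C * Cᴴ = P ∧ P * C = C := by
  classical
  set U : Matrix (Fin m) (Fin m) ℂ := (hPH.eigenvectorUnitary : Matrix (Fin m) (Fin m) ℂ)
    with hUdef
  set d : Fin m → ℂ := RCLike.ofReal ∘ hPH.eigenvalues with hddef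
  have hspec : P = U * diagonal d * star U := hPH.spectral_theorem
  have hUU : star U * U = 1 :=
    (Matrix.mem_unitaryGroup_iff').mp hPH.eigenvectorUnitary.2
  have hUU' : U * star U = 1 :=
    (Matrix.mem_unitaryGroup_iff).mp hPH.eigenvectorUnitary.2
  -- the diagonal is idempotent
  have hdiag : star U * P * U = diagonal d := by
    rw [hspec]; simp only [Matrix.mul_assoc]
    rw [hUU, Matrix.mul_one, ← Matrix.mul_assoc, hUU, Matrix.one_mul]
  have hD : diagonal d * diagonal d = diagonal d := by
    calc diagonal d * diagonal d = (star U * P * U) * (star U * P * U) := by rw [hdiag]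
      _ = star U * (P * (U * star U) * P) * U := by simp only [Matrix.mul_assoc]
      _ = star U * (P * P) * U := by rw [hUU']; simp only [Matrix.mul_one, Matrix.mul_assoc]
      _ = star U * P * U := by rw [hP2, Matrix.mul_assoc]
      _ = diagonal d := hdiag
  have hd01 : ∀ i, d i = 0 ∨ d i = 1 := by
    intro i
    have hdd : d i * d i = d i := by
      have := congrFun (congrFun hD i) i
      simpa [Matrix.diagonal_mul_diagonal, Matrix.diagonal_apply_eq] using this
    have h0 : d i * (d i - 1) = 0 := by ring_nf; linear_combination hdd
    rcases mul_eq_zero.mp h0 with h | h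
    · exact Or.inl h
    · exact Or.inr (sub_eq_zero.mp h)
  -- the number of nonzero diagonal entries is r
  have hUdet : IsUnit U.det := Matrix.UnitaryGroup.det_isUnit hPH.eigenvectorUnitary
  have hUsdet : IsUnit (star U).det := by
    rw [Matrix.star_eq_conjTranspose, Matrix.det_conjTranspose]
    exact hUdet.star
  have hrd : (diagonal d).rank = r := by
    have : P.rank = (diagonal d).rank := by
      rw [hspec, Matrix.rank_mul_eq_left_of_isUnit_det _ _ hUsdet,
        Matrix.rank_mul_eq_right_of_isUnit_det _ _ hUdet]
    rw [← this, hr]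
  have hcard : Fintype.card {i // d i ≠ 0} = r := by
    rw [← Matrix.rank_diagonal d, hrd]
  -- an injection from the nonzero indices into `Fin m₁`
  let eqv : {i // d i ≠ 0} ≃ Fin r := Fintype.equivFinOfCardEq hcard
  let g : {i // d i ≠ 0} → Fin m₁ := fun x => Fin.castLE hm (eqv x)
  have hg : Function.Injective g := fun x y hxy =>
    eqv.injective (Fin.castLE_injective hm hxy)
  -- the selector matrix
  let S : Matrix (Fin m) (Fin m₁) ℂ :=
    Matrix.of fun i j => if h : d i ≠ 0 then (if j = g ⟨i, h⟩ then 1 else 0) else 0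
  have hSd : ∀ i j (h : d i ≠ 0), S i j = if j = g ⟨i, h⟩ then 1 else 0 := by
    intro i j h; simp only [S, Matrix.of_apply, dif_pos h]
  have hSz : ∀ i j, d i = 0 → S i j = 0 := by
    intro i j h; simp only [S, Matrix.of_apply, h, ne_eq, not_true_eq_false]
    simp
  have hSS : S * Sᴴ = diagonal d := by
    ext i i'
    simp only [Matrix.mul_apply, Matrix.conjTranspose_apply]
    by_cases h : d i ≠ 0
    · by_cases h' : d i' ≠ 0
      · have : ∀ j, S i j * star (S i' j) =
            if j = g ⟨i, h⟩ then (if j = g ⟨i', h'⟩ then 1 else 0) else 0 := by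
          intro j
          rw [hSd i j h, hSd i' j h']
          by_cases h1 : j = g ⟨i, h⟩ <;> by_cases h2 : j = g ⟨i', h'⟩ <;>
            simp [h1, h2]
        rw [Finset.sum_congr rfl fun j _ => this j, Finset.sum_ite_eq' Finset.univ]
        simp only [Finset.mem_univ, if_true]
        by_cases hii : i = i'
        · subst hii
          simp only [if_pos rfl, Matrix.diagonal_apply_eq]
          exact ((hd01 i).resolve_left h).symm
        · have hne : g ⟨i, h⟩ ≠ g ⟨i', h'⟩ := fun hc => hii (congrArg Subtype.val (hg hc))
          rw [if_neg hne, Matrix.diagonal_apply_ne _ hii]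
      · push_neg at h'
        simp only [hSz i' _ h', star_zero, mul_zero, Finset.sum_const_zero]
        by_cases hii : i = i'
        · subst hii; exact absurd h' h
        · rw [Matrix.diagonal_apply_ne _ hii]
    · push_neg at h
      simp only [hSz i _ h, zero_mul, Finset.sum_const_zero]
      by_cases hii : i = i'
      · subst hii; rw [Matrix.diagonal_apply_eq, h]
      · rw [Matrix.diagonal_apply_ne _ hii]
  have hDS : diagonal d * S = S := by
    ext i j
    rw [Matrix.diagonal_mul]
    rcases hd01 i with h | h
    · rw [h, hSz i j h, mul_zero]
    · rw [h, one_mul]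
  refine ⟨U * S, ?_, ?_⟩
  · calc U * S * (U * S)ᴴ = U * (S * Sᴴ) * Uᴴ := by
          rw [Matrix.conjTranspose_mul]; simp only [Matrix.mul_assoc]
    _ = U * diagonal d * star U := by rw [hSS, Matrix.star_eq_conjTranspose, Matrix.mul_assoc]
    _ = P := hspec.symm
  · calc P * (U * S) = U * diagonal d * (star U * U) * S := by
          rw [hspec]; simp only [Matrix.mul_assoc]
    _ = U * (diagonal d * S) := by rw [hUU]; simp only [Matrix.mul_one, Matrix.mul_assoc]
    _ = U * S := by rw [hDS]

end Stmt5Aux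

open Stmt5Aux in
theorem stmt_5 {m n r m₁ : ℕ} (A : Matrix (Fin m) (Fin n) ℂ)
    (hA : A.rank = r) (hm₁ : r ≤ m₁) :
    ∀ X : Matrix (Fin n) (Fin m) ℂ,
      (A * X * A = A ∧ X * A * X = X ∧ (A * X)ᴴ = A * X) ↔
      ∃ (Z : Matrix (Fin n) (Fin m₁) ℂ) (W : Matrix (Fin m₁) (Fin m) ℂ),
        (A * Z).rank = r ∧ IsMPInv (A * Z) W ∧ X = Z * W := by
  intro X
  constructor
  · rintro ⟨h1, h2, h3⟩
    have hP2 : (A * X) * (A * X) = A * X := by rw [← Matrix.mul_assoc, h1]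
    have hPH : (A * X).IsHermitian := h3
    have hrP : (A * X).rank = r := by
      refine le_antisymm (hA ▸ Matrix.rank_mul_le_left A X) ?_
      have h := Matrix.rank_mul_le_left (A * X) A
      rw [h1, hA] at h
      exact h
    obtain ⟨C, hC1, hC2⟩ := exists_factor hP2 hPH hrP hm₁
    have hAZ : A * (X * C) = C := by rw [← Matrix.mul_assoc]; exact hC2
    have hCCC : C * Cᴴ * C = C := by rw [hC1]; exact hC2
    have hMP2 : Cᴴ * C * Cᴴ = Cᴴ := by
      have := congrArg conjTranspose hCCC
      simpa [Matrix.conjTranspose_mul, Matrix.mul_assoc] using this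
    refine ⟨X * C, Cᴴ, ?_, ?_, ?_⟩
    · have hle : C.rank ≤ r := by
        have h := Matrix.rank_mul_le_left (C * Cᴴ) C
        rw [hCCC, hC1, hrP] at h
        exact h
      have hge : r ≤ C.rank := by
        have h := Matrix.rank_mul_le_left C Cᴴ
        rw [hC1, hrP] at h
        exact h
      rw [hAZ]
      exact le_antisymm hle hge
    · rw [hAZ]
      exact ⟨hCCC, hMP2, by rw [hC1]; exact h3, by simp [Matrix.conjTranspose_mul]⟩
    · rw [Matrix.mul_assoc, hC1, ← Matrix.mul_assoc, h2]
  · rintro ⟨Z, W, hrZ, ⟨hm1, hm2, hm3, hm4⟩, rfl⟩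
    have hBW2 : ((A * Z) * W) * ((A * Z) * W) = (A * Z) * W := by
      rw [← Matrix.mul_assoc, hm1]
    have h5 := range_mul_le ((A * Z) * W) (A * Z)
    rw [hm1] at h5
    have hBA : LinearMap.range (A * Z).mulVecLin ≤ LinearMap.range A.mulVecLin :=
      range_mul_le A Z
    have hEq : LinearMap.range (A * Z).mulVecLin = LinearMap.range A.mulVecLin := by
      apply Submodule.eq_of_le_of_finrank_le hBA
      exact (hA.trans hrZ.symm).le
    refine ⟨?_, ?_, ?_⟩
    · rw [← Matrix.mul_assoc]
      exact absorb hBW2 (hEq ▸ h5)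
    · calc (Z * W) * A * (Z * W) = Z * ((W * (A * Z)) * W) := by
            simp only [Matrix.mul_assoc]
      _ = Z * W := by rw [hm2]
    · rw [← Matrix.mul_assoc]
      exact hm3
end

section
/- Let A be an m×n complex matrix and Y an n₁×m complex matrix. Then the matrix X = (YA)† Y satisfies XAX = X and (XA)* = XA, i.e., X is always a {2,4}-inverse of A. -/
open Matrix

theorem stmt_16 {m n n₁ : ℕ} (A : Matrix (Fin m) (Fin n) ℂ) (Y : Matrix (Fin n₁) (Fin m) ℂ)
    (W : Matrix (Fin n) (Fin n₁) ℂ) (hW : IsMPInv (Y * A) W) :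
    (W * Y) * A * (W * Y) = W * Y ∧ ((W * Y) * A)ᴴ = (W * Y) * A := by
  obtain ⟨h1, h2, h3, h4⟩ := hW
  refine ⟨?_, ?_⟩
  · have : W * (Y * A) * W * Y = W * Y := by rw [h2]
    simpa only [Matrix.mul_assoc] using this
  · have : (W * (Y * A))ᴴ = W * (Y * A) := h4
    simpa only [Matrix.mul_assoc] using this
end

section
/- Let A be an m×n complex matrix and Z an n×m₁ complex matrix. Then the matrix X = Z (AZ)† satisfies XAX = X and (AX)* = AX, i.e., X is always a {2,3}-inverse of A. -/
open Matrix

theorem stmt_17 {m n m₁ : ℕ} (A : Matrix (Fin m) (Fin n) ℂ) (Z : Matrix (Fin n) (Fin m₁) ℂ)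
    (W : Matrix (Fin m₁) (Fin m) ℂ) (hW : IsMPInv (A * Z) W) :
    (Z * W) * A * (Z * W) = Z * W ∧ (A * (Z * W))ᴴ = A * (Z * W) := by
  obtain ⟨-, h2, h3, -⟩ := hW
  constructor
  · calc (Z * W) * A * (Z * W) = Z * (W * (A * Z) * W) := by simp only [Matrix.mul_assoc]
    _ = Z * W := by rw [h2]
  · calc (A * (Z * W))ᴴ = ((A * Z) * W)ᴴ := by simp only [Matrix.mul_assoc]
    _ = A * Z * W := h3
    _ = A * (Z * W) := by simp only [Matrix.mul_assoc]
end
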